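/- arXiv:2503.14297 — 2 statements merged into one kernel-verified Lean document; each statement's English description precedes it below -/
import Mathlib

section
/- Let Γ be a real symmetric positive semidefinite n×n matrix and let Λ be a diagonal matrix with Λ(i,i) = c / (Σ_j |Γ(i,j)|) when Σ_j |Γ(i,j)| > 0, and Λ(i,i) = d > 0 otherwise, where 0 < c < 2. Then 2Λ − ΛΓΛ is positive definite. -/
open Matrix

theorem stmt2 {n : Type*} [Fintype n] [DecidableEq n]
    (Γ : Matrix n n ℝ) (hΓ : Γ.PosSemidef)
    (c d : ℝ) (hc0 : 0 < c) (hc2 : c < 2) (hd : 0 < d)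
    (Λ : Matrix n n ℝ)
    (hΛ : Λ = Matrix.diagonal (fun i =>
      if 0 < ∑ j, |Γ i j| then c / ∑ j, |Γ i j| else d)) :
    ((2:ℝ) • Λ - Λ * Γ * Λ).PosDef := by
  have hsym : ∀ i j, Γ i j = Γ j i := by
    intro i j
    conv_lhs => rw [← hΓ.1]
    simp [Matrix.conjTranspose_apply]
  set s : n → ℝ := fun i => ∑ j, |Γ i j| with hs
  set l : n → ℝ := fun i => if 0 < s i then c / s i else d with hl
  have hΛ' : Λ = Matrix.diagonal l := hΛ
  subst hΛ'
  have hs0 : ∀ i, 0 ≤ s i := fun i => Finset.sum_nonneg fun j _ => abs_nonneg _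
  have hl0 : ∀ i, 0 < l i := by
    intro i
    simp only [hl]
    split
    · exact div_pos hc0 (by assumption)
    · exact hd
  have hsl : ∀ i, s i * l i ≤ c := by
    intro i
    simp only [hl]
    split
    · rw [mul_div_cancel₀ _ (by positivity : s i ≠ 0)]
    · have h0 : s i = 0 := le_antisymm (not_lt.1 (by assumption)) (hs0 i)
      rw [h0, zero_mul]; exact hc0.le
  rw [Matrix.posDef_iff_dotProduct_mulVec]
  constructor
  · -- Hermitian
    have hΓH : Γᴴ = Γ := hΓ.1
    have hΓT : Γᵀ = Γ := by ext i j; exact hsym j i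
    show _ᴴ = _
    simp [Matrix.conjTranspose_mul, hΓH, hΓT, Matrix.diagonal_conjTranspose, Matrix.mul_assoc]
  · intro x hx
    set y : n → ℝ := fun i => l i * x i with hy
    have hdl : (Matrix.diagonal l *ᵥ x) = y := funext fun i => Matrix.mulVec_diagonal l x i
    have key : (star x) ⬝ᵥ (((2:ℝ) • Matrix.diagonal l - Matrix.diagonal l * Γ * Matrix.diagonal l) *ᵥ x)
        = 2 * (∑ i, l i * x i ^ 2) - ∑ i, ∑ j, y i * (Γ i j * y j) := by
      simp only [star_trivial, Matrix.sub_mulVec, dotProduct_sub,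
        Matrix.smul_mulVec, dotProduct_smul]
      congr 1
      · simp only [hdl, smul_eq_mul, dotProduct, Finset.mul_sum]
        refine Finset.sum_congr rfl fun i _ => ?_
        simp only [hy]
        ring
      · rw [← Matrix.mulVec_mulVec, ← Matrix.mulVec_mulVec, hdl, Matrix.dotProduct_mulVec]
        simp only [dotProduct, Matrix.vecMul_diagonal, Matrix.mulVec]
        refine Finset.sum_congr rfl fun i _ => ?_
        simp only [dotProduct, Finset.mul_sum]
        refine Finset.sum_congr rfl fun j _ => ?_
        simp only [hy]
        ring
    rw [key]
    have hQ : ∑ i, ∑ j, y i * (Γ i j * y j) ≤ ∑ i, s i * y i ^ 2 := by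
      have step1 : ∑ i, ∑ j, y i * (Γ i j * y j)
          ≤ ∑ i, ∑ j, |Γ i j| * (y i ^ 2 + y j ^ 2) / 2 := by
        refine Finset.sum_le_sum fun i _ => Finset.sum_le_sum fun j _ => ?_
        nlinarith [sq_nonneg (y i - y j), sq_nonneg (y i + y j),
          le_abs_self (Γ i j), neg_abs_le (Γ i j), abs_nonneg (Γ i j)]
      refine step1.trans (le_of_eq ?_)
      calc ∑ i, ∑ j, |Γ i j| * (y i ^ 2 + y j ^ 2) / 2
          = ∑ i, ∑ j, (|Γ i j| * y i ^ 2 / 2 + |Γ i j| * y j ^ 2 / 2) := by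
            exact Finset.sum_congr rfl fun i _ => Finset.sum_congr rfl fun j _ => by ring
        _ = (∑ i, ∑ j, |Γ i j| * y i ^ 2 / 2) + ∑ i, ∑ j, |Γ i j| * y j ^ 2 / 2 := by
            rw [← Finset.sum_add_distrib]
            exact Finset.sum_congr rfl fun i _ => Finset.sum_add_distrib
        _ = (∑ i, ∑ j, |Γ i j| * y i ^ 2 / 2) + ∑ i, ∑ j, |Γ i j| * y i ^ 2 / 2 := by
            congr 1
            rw [Finset.sum_comm]
            exact Finset.sum_congr rfl fun a _ => Finset.sum_congr rfl fun b _ => by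
              rw [hsym b a]
        _ = ∑ i, s i * y i ^ 2 := by
            rw [← Finset.sum_add_distrib]
            refine Finset.sum_congr rfl fun i _ => ?_
            rw [← Finset.sum_add_distrib]
            simp only [hs, Finset.sum_mul]
            exact Finset.sum_congr rfl fun j _ => by ring
    have hQc : ∑ i, s i * y i ^ 2 ≤ c * ∑ i, l i * x i ^ 2 := by
      rw [Finset.mul_sum]
      refine Finset.sum_le_sum fun i _ => ?_
      have h1 : s i * y i ^ 2 = (s i * l i) * (l i * x i ^ 2) := by simp only [hy]; ring
      rw [h1]
      exact mul_le_mul_of_nonneg_right (hsl i)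
        (mul_nonneg (hl0 i).le (sq_nonneg _))
    have hT : 0 < ∑ i, l i * x i ^ 2 := by
      obtain ⟨i, hi⟩ := Function.ne_iff.mp hx
      refine Finset.sum_pos' (fun j _ => mul_nonneg (hl0 j).le (sq_nonneg _))
        ⟨i, Finset.mem_univ i, mul_pos (hl0 i) (sq_pos_of_ne_zero hi)⟩
    nlinarith [hQ, hQc, hT]
end

section
/- For a single-hidden-layer network: if M = I and Λ is diagonal positive definite with Λ⁻¹ ≻ (1/2) W₁W₁ᵀ, then for γ = σ_max(W₂(2Λ − ΛW₁W₁ᵀΛ)⁻¹W₂ᵀ), the 3×3 block matrix [[I, −W₁ᵀΛ, 0],[−ΛW₁, 2Λ, −W₂ᵀ],[0, −W₂, γI]] is positive semidefinite. -/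
open Matrix

noncomputable def sigmaMax {n : Type*} [Fintype n] [DecidableEq n]
    {A : Matrix n n ℝ} (hA : A.IsHermitian) : ℝ :=
  ⨆ i, |hA.eigenvalues i|

/-- Congruence of a positive definite matrix by an invertible matrix. -/
lemma posDef_mul_mul_conjTranspose {n : Type*} [Fintype n] [DecidableEq n]
    {M N : Matrix n n ℝ} (hM : M.PosDef) (hN : IsUnit N) : (N * M * Nᴴ).PosDef := by
  have hMt : Mᵀ = M := by rw [← Matrix.conjTranspose_eq_transpose_of_trivial]; exact hM.1
  refine .of_dotProduct_mulVec_pos (by simp [Matrix.IsHermitian, conjTranspose_mul, hMt, Matrix.mul_assoc]) fun x hx => ?_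
  have hy : Nᴴ *ᵥ x ≠ 0 := by
    have : Function.Injective (Nᴴ).mulVec := by
      rw [Matrix.mulVec_injective_iff_isUnit]
      simpa using hN
    intro h
    exact hx (this (by simpa using h))
  have key : star x ⬝ᵥ ((N * M * Nᴴ) *ᵥ x)
      = star (Nᴴ *ᵥ x) ⬝ᵥ (M *ᵥ (Nᴴ *ᵥ x)) := by
    rw [← mulVec_mulVec, ← mulVec_mulVec, dotProduct_mulVec, star_mulVec,
      conjTranspose_conjTranspose, ← dotProduct_mulVec]
  rw [key]
  exact hM.dotProduct_mulVec_pos hy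

lemma posDef_two_smul {n : Type*} [Fintype n] [DecidableEq n]
    {M : Matrix n n ℝ} (hM : M.PosDef) : ((2:ℝ) • M).PosDef := by
  have hMt : Mᵀ = M := by rw [← Matrix.conjTranspose_eq_transpose_of_trivial]; exact hM.1
  refine .of_dotProduct_mulVec_pos (by simp [Matrix.IsHermitian, conjTranspose_smul, hMt]) fun x hx => ?_
  have := hM.dotProduct_mulVec_pos hx
  simp only [smul_mulVec, dotProduct_smul, smul_eq_mul]
  linarith

/-- A real positive-definite block construction via the Schur complement. -/
lemma posDef_fromBlocks₁₁' {m n : Type*} [Fintype m] [DecidableEq m] [Fintype n] [DecidableEq n]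
    {A : Matrix m m ℝ} (B : Matrix m n ℝ) {D : Matrix n n ℝ}
    (hA : A.PosDef) (hS : (D - Bᴴ * A⁻¹ * B).PosDef) :
    (Matrix.fromBlocks A B Bᴴ D).PosDef := by
  haveI := hA.isUnit.invertible
  refine .of_dotProduct_mulVec_pos ((Matrix.IsHermitian.fromBlocks₁₁ B D hA.1).mpr hS.1) fun x hx => ?_
  have hdecomp := Matrix.schur_complement_eq₁₁ (α := ℝ) B D (x ∘ Sum.inl) (x ∘ Sum.inr) hA.1
  rw [Sum.elim_comp_inl_inr x] at hdecomp
  rw [dotProduct_mulVec, hdecomp]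
  by_cases h2 : x ∘ Sum.inr = 0
  · have h1 : x ∘ Sum.inl ≠ 0 := by
      intro h1
      apply hx
      ext (i | j)
      · exact congrFun h1 i
      · exact congrFun h2 j
    rw [h2]
    simp only [mulVec_zero, add_zero, star_zero, zero_vecMul, zero_dotProduct]
    rw [← dotProduct_mulVec]
    exact hA.dotProduct_mulVec_pos h1
  · refine add_pos_of_nonneg_of_pos ?_ ?_
    · rw [← dotProduct_mulVec]
      exact hA.posSemidef.dotProduct_mulVec_nonneg _
    · rw [← dotProduct_mulVec]
      exact hS.dotProduct_mulVec_pos h2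

/-- `γ I - H` is PSD when `γ` is the sup of absolute values of eigenvalues of Hermitian `H`. -/
lemma sigmaMax_smul_one_sub_posSemidef {n : Type*} [Fintype n] [DecidableEq n]
    {H : Matrix n n ℝ} (hH : H.IsHermitian) :
    ((⨆ i, |hH.eigenvalues i|) • (1 : Matrix n n ℝ) - H).PosSemidef := by
  set γ := ⨆ i, |hH.eigenvalues i| with hγdef
  have hγ : ∀ i, hH.eigenvalues i ≤ γ :=
    fun i => (le_abs_self _).trans (le_ciSup (f := fun i => |hH.eigenvalues i|) (Set.Finite.bddAbove (Set.finite_range _)) i)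
  set U : Matrix n n ℝ := (hH.eigenvectorUnitary : Matrix n n ℝ) with hU
  have hUU : U * Uᴴ = 1 := by
    rw [← Matrix.star_eq_conjTranspose]
    exact Matrix.mem_unitaryGroup_iff.mp hH.eigenvectorUnitary.2
  have key : γ • (1 : Matrix n n ℝ) - H
      = U * Matrix.diagonal (fun i => γ - hH.eigenvalues i) * Uᴴ := by
    have h1 : γ • (1 : Matrix n n ℝ) = U * (γ • (1 : Matrix n n ℝ)) * Uᴴ := by
      rw [Matrix.mul_smul, Matrix.smul_mul, Matrix.mul_one, hUU]
    have h2 : H = U * Matrix.diagonal hH.eigenvalues * Uᴴ := by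
      conv_lhs => rw [hH.spectral_theorem]
      simp [RCLike.ofReal_real_eq_id, Matrix.star_eq_conjTranspose]
      rfl
    have h3 : U * (γ • (1 : Matrix n n ℝ)) * Uᴴ - U * Matrix.diagonal hH.eigenvalues * Uᴴ
        = U * Matrix.diagonal (fun i => γ - hH.eigenvalues i) * Uᴴ := by
      rw [← Matrix.sub_mul, ← Matrix.mul_sub, Matrix.smul_one_eq_diagonal, Matrix.diagonal_sub]
    rw [h1, ← h3, ← h2]
  rw [key]
  exact (Matrix.posSemidef_diagonal_iff.mpr fun i => sub_nonneg.mpr (hγ i)).mul_mul_conjTranspose_same U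

theorem stmt11 {n0 n1 n2 : ℕ}
    (W1 : Matrix (Fin n1) (Fin n0) ℝ) (W2 : Matrix (Fin n2) (Fin n1) ℝ)
    (d : Fin n1 → ℝ) (hd : ∀ i, 0 < d i)
    (Λ : Matrix (Fin n1) (Fin n1) ℝ) (hΛ : Λ = Matrix.diagonal d)
    (hfeas : (Λ⁻¹ - (1/2 : ℝ) • (W1 * W1ᵀ)).PosDef)
    (hH : (W2 * ((2:ℝ) • Λ - Λ * W1 * W1ᵀ * Λ)⁻¹ * W2ᵀ).IsHermitian)
    (γ : ℝ) (hγ : γ = sigmaMax hH) :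
    (Matrix.fromBlocks
      (Matrix.fromBlocks (1 : Matrix (Fin n0) (Fin n0) ℝ) (-(W1ᵀ * Λ))
        (-(Λ * W1)) ((2:ℝ) • Λ))
      (Matrix.fromRows (0 : Matrix (Fin n0) (Fin n2) ℝ) (-W2ᵀ))
      (Matrix.fromCols (0 : Matrix (Fin n2) (Fin n0) ℝ) (-W2))
      (γ • (1 : Matrix (Fin n2) (Fin n2) ℝ))).PosSemidef := by
  have hΛsym : Λᵀ = Λ := by rw [hΛ, Matrix.diagonal_transpose]
  have hΛH : Λᴴ = Λ := by
    rw [Matrix.conjTranspose_eq_transpose_of_trivial, hΛsym]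
  have hΛpd : Λ.PosDef := by rw [hΛ]; exact Matrix.posDef_diagonal_iff.mpr hd
  haveI := hΛpd.isUnit.invertible
  set B : Matrix (Fin n0) (Fin n1) ℝ := -(W1ᵀ * Λ) with hB
  have hBH : Bᴴ = -(Λ * W1) := by
    rw [hB, conjTranspose_neg, conjTranspose_mul, hΛH,
      Matrix.conjTranspose_eq_transpose_of_trivial, transpose_transpose]
  set K : Matrix (Fin n1) (Fin n1) ℝ := (2:ℝ) • Λ - Λ * W1 * W1ᵀ * Λ with hKdef
  -- K is positive definite
  have hK : K.PosDef := by
    have h2f := posDef_two_smul hfeas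
    have hcong := posDef_mul_mul_conjTranspose h2f hΛpd.isUnit
    have expand : Λ * ((2:ℝ) • (Λ⁻¹ - (1/2 : ℝ) • (W1 * W1ᵀ))) * Λᴴ = K := by
      rw [hΛH, Matrix.mul_smul, Matrix.smul_mul, Matrix.mul_sub, Matrix.sub_mul,
        Matrix.mul_inv_of_invertible, Matrix.one_mul, Matrix.mul_smul, Matrix.smul_mul,
        smul_sub, smul_smul]
      norm_num
      rw [hKdef]
      simp only [Matrix.mul_assoc]
    rw [expand] at hcong
    exact hcong
  haveI hKinv := hK.isUnit.invertible
  -- the top-left 2x2 block is positive definite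
  have hBB : Bᴴ * B = Λ * W1 * W1ᵀ * Λ := by
    rw [hBH, hB, Matrix.neg_mul, Matrix.mul_neg, neg_neg]
    simp only [Matrix.mul_assoc]
  have hSchur : (2:ℝ) • Λ - Bᴴ * (1 : Matrix (Fin n0) (Fin n0) ℝ)⁻¹ * B = K := by
    rw [inv_one, Matrix.mul_one, hBB, hKdef]
  have hSchur2 : (2:ℝ) • Λ - Bᴴ * B = K := by rw [hBB, hKdef]
  have hP : (Matrix.fromBlocks (1 : Matrix (Fin n0) (Fin n0) ℝ) B Bᴴ ((2:ℝ) • Λ)).PosDef :=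
    posDef_fromBlocks₁₁' B Matrix.PosDef.one (hSchur ▸ hK)
  haveI hPinv := hP.isUnit.invertible
  haveI : Invertible (1 : Matrix (Fin n0) (Fin n0) ℝ) := invertibleOne
  have e1 : (2:ℝ) • Λ - Bᴴ * ⅟(1 : Matrix (Fin n0) (Fin n0) ℝ) * B = K := by
    rw [invOf_one, Matrix.mul_one, hBB, hKdef]
  haveI hS'inv : Invertible ((2:ℝ) • Λ - Bᴴ * ⅟(1 : Matrix (Fin n0) (Fin n0) ℝ) * B) :=
    e1 ▸ hKinv
  set Q : Matrix (Fin n0 ⊕ Fin n1) (Fin n2) ℝ :=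
    Matrix.fromRows (0 : Matrix (Fin n0) (Fin n2) ℝ) (-W2ᵀ) with hQ
  have hQH : Qᴴ = Matrix.fromCols (0 : Matrix (Fin n2) (Fin n0) ℝ) (-W2) := by
    rw [hQ, Matrix.conjTranspose_fromRows_eq_fromCols_conjTranspose]
    simp [Matrix.conjTranspose_eq_transpose_of_trivial]
  rw [← hBH, ← hQH, Matrix.PosDef.fromBlocks₁₁ Q (γ • (1 : Matrix (Fin n2) (Fin n2) ℝ)) hP]
  have hQPQ : Qᴴ * (Matrix.fromBlocks (1 : Matrix (Fin n0) (Fin n0) ℝ) B Bᴴ ((2:ℝ) • Λ))⁻¹ * Q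
      = W2 * K⁻¹ * W2ᵀ := by
    have hPinvEq : (Matrix.fromBlocks (1 : Matrix (Fin n0) (Fin n0) ℝ) B Bᴴ ((2:ℝ) • Λ))⁻¹
        = ⅟(Matrix.fromBlocks (1 : Matrix (Fin n0) (Fin n0) ℝ) B Bᴴ ((2:ℝ) • Λ)) :=
      (Matrix.invOf_eq_nonsing_inv _).symm
    rw [hPinvEq, Matrix.invOf_fromBlocks₁₁_eq, hQH, hQ,
      Matrix.fromCols_mul_fromBlocks, Matrix.fromCols_mul_fromRows]
    simp only [Matrix.invOf_eq_nonsing_inv, inv_one, Matrix.mul_one, Matrix.one_mul,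
      Matrix.zero_mul, Matrix.mul_zero, zero_add, add_zero, Matrix.neg_mul, Matrix.mul_neg,
      neg_neg]
    simp [Matrix.neg_mul]
    rw [← Matrix.conjTranspose_eq_transpose_of_trivial B, hSchur2]
  rw [hQPQ, hγ]
  exact sigmaMax_smul_one_sub_posSemidef hH
end
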